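/- Let (Ω, 𝓕, P) be a probability space and let (ε_t)_{t≥1} be an independent family of square-integrable real random variables with E[ε_t] = 0 and Var(ε_t) = σ² for all t. Let c, φ ∈ ℝ, define random variables y_t by y_0 = 0 and y_t = c + φ·y_{t−1} + ε_t for t ≥ 1, and for an integer n ≥ 1 set ȳ_φ = ((1−φ)·Σ_{i=1}^{n−1} y_i + y_n)/n. Then E[ȳ_φ] = c and Var(ȳ_φ) = σ²/n. -/

import Mathlib

open MeasureTheory ProbabilityTheory

private lemma variance_const_add' {Ω : Type*} [MeasurableSpace Ω] (P : Measure Ω)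
    [IsProbabilityMeasure P] (a : ℝ) (X : Ω → ℝ) (hX : Integrable X P) :
    variance (fun ω => a + X ω) P = variance X P := by
  have hmean : ∫ ω, (a + X ω) ∂P = a + ∫ ω, X ω ∂P := by
    rw [integral_add (integrable_const a) hX]
    simp
  unfold ProbabilityTheory.variance ProbabilityTheory.evariance
  congr 1
  refine lintegral_congr fun ω => ?_
  rw [hmean]
  ring_nf

/-- Equations (A.17)-(A.18): the summary statistic
`ȳ_φ = ((1-φ)·∑_{i=1}^{n-1} y_i + y_n)/n` of Example 1 satisfies
`E[ȳ_φ] = c` and `Var(ȳ_φ) = σ²/n`. -/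
theorem ar1_summary_mean_var {Ω : Type*} [MeasurableSpace Ω] (P : Measure Ω)
    [IsProbabilityMeasure P]
    (σ : ℝ) (ε : ℕ → Ω → ℝ)
    (hindep : iIndepFun (fun t : ℕ => ε (t + 1)) P)
    (hεL2 : ∀ t : ℕ, 1 ≤ t → MemLp (ε t) 2 P)
    (hεmean : ∀ t : ℕ, 1 ≤ t → ∫ ω, ε t ω ∂P = 0)
    (hεvar : ∀ t : ℕ, 1 ≤ t → variance (ε t) P = σ ^ 2)
    (c φ : ℝ)
    (y : ℕ → Ω → ℝ)
    (h0 : ∀ ω, y 0 ω = 0)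
    (hrec : ∀ t : ℕ, 1 ≤ t → ∀ ω, y t ω = c + φ * y (t - 1) ω + ε t ω)
    (n : ℕ) (hn : 1 ≤ n)
    (ybar : Ω → ℝ)
    (hybar : ∀ ω, ybar ω = ((1 - φ) * ∑ i ∈ Finset.Icc 1 (n - 1), y i ω + y n ω) / n) :
    (∫ ω, ybar ω ∂P = c) ∧ variance ybar P = σ ^ 2 / n := by
  -- telescoping identity
  have key : ∀ m : ℕ, ∀ ω,
      (1 - φ) * ∑ i ∈ Finset.Icc 1 m, y i ω + y (m + 1) ω
        = (m + 1 : ℝ) * c + ∑ j ∈ Finset.range (m + 1), ε (j + 1) ω := by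
    intro m
    induction m with
    | zero =>
      intro ω
      simp only [Finset.Icc_self, Finset.Icc_eq_empty_of_lt (by norm_num : (1:ℕ) > 0)]
      simp only [show Finset.Icc 1 0 = (∅ : Finset ℕ) by rfl, Finset.sum_empty,
        Finset.range_one, Finset.sum_singleton]
      rw [hrec 1 le_rfl ω]
      simp [h0 ω]
    | succ m ih =>
      intro ω
      rw [Finset.sum_Icc_succ_top (by omega : 1 ≤ m + 1), Finset.sum_range_succ]
      have hr := hrec (m + 2) (by omega) ω
      simp only [show m + 2 - 1 = m + 1 from rfl] at hr
      have := ih ω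
      push_cast
      push_cast at this
      nlinarith [this, hr]
  -- pointwise form of ybar
  have hybar' : ∀ ω, ybar ω = c + (n : ℝ)⁻¹ * ∑ j ∈ Finset.range n, ε (j + 1) ω := by
    intro ω
    rw [hybar ω]
    have hm : n - 1 + 1 = n := Nat.succ_pred_eq_of_pos hn
    have := key (n - 1) ω
    rw [hm] at this
    rw [this]
    have hn' : (n : ℝ) ≠ 0 := by positivity
    have : ((n - 1 : ℕ) + 1 : ℝ) = (n : ℝ) := by
      have : ((n - 1 : ℕ) : ℝ) = (n : ℝ) - 1 := by
        push_cast [Nat.cast_sub hn]; ring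
      rw [this]; ring
    rw [this]
    field_simp
  have hL2 : ∀ j ∈ Finset.range n, MemLp (ε (j + 1)) 2 P := fun j _ =>
    hεL2 (j + 1) (by omega)
  have hint : ∀ j ∈ Finset.range n, Integrable (ε (j + 1)) P := fun j hj =>
    (hL2 j hj).integrable one_le_two
  have hSint : Integrable (fun ω => ∑ j ∈ Finset.range n, ε (j + 1) ω) P :=
    integrable_finset_sum _ hint
  constructor
  · -- mean
    have : ∫ ω, ybar ω ∂P
        = ∫ ω, (c + (n : ℝ)⁻¹ * ∑ j ∈ Finset.range n, ε (j + 1) ω) ∂P :=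
      integral_congr_ae (Filter.Eventually.of_forall hybar')
    rw [this, integral_add (integrable_const c) (hSint.const_mul _),
      integral_const, integral_const_mul, integral_finset_sum _ hint]
    have : ∑ j ∈ Finset.range n, ∫ ω, ε (j + 1) ω ∂P = 0 := by
      apply Finset.sum_eq_zero
      intro j _
      exact hεmean (j + 1) (by omega)
    simp [this]
  · -- variance
    have hveq : ybar = fun ω => c + (n : ℝ)⁻¹ * ∑ j ∈ Finset.range n, ε (j + 1) ω :=
      funext hybar'
    rw [hveq, variance_const_add' P c _ (hSint.const_mul _), variance_const_mul]
    have hpair : Set.Pairwise ↑(Finset.range n)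
        (fun i j => IndepFun (ε (i + 1)) (ε (j + 1)) P) := fun i _ j _ hij =>
      hindep.indepFun hij
    have hsum : variance (∑ j ∈ Finset.range n, fun ω => ε (j + 1) ω) P
        = ∑ j ∈ Finset.range n, variance (ε (j + 1)) P :=
      IndepFun.variance_sum hL2 hpair
    have hS : (fun ω => ∑ j ∈ Finset.range n, ε (j + 1) ω)
        = ∑ j ∈ Finset.range n, fun ω => ε (j + 1) ω := by
      funext ω; simp
    rw [hS, hsum]
    have : ∑ j ∈ Finset.range n, variance (ε (j + 1)) P = n * σ ^ 2 := by
      rw [Finset.sum_congr rfl fun j _ => hεvar (j + 1) (by omega)]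
      simp [mul_comm]
    rw [this]
    have hn' : (n : ℝ) ≠ 0 := by positivity
    field_simp
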